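/- (Classification calibration of logistic loss with asymmetric weights) For c₁, c₋₁ > 0 define G(α) = c₁·log(1+e^{−α}) + c₋₁·log(1+e^{α}). Then inf_α G(α) = c₁ log((c₁+c₋₁)/c₁) + c₋₁ log((c₁+c₋₁)/c₋₁), attained at α = log(c₁/c₋₁), and if c₁ > c₋₁ then inf_{α≤0} G(α) = G(0) = (c₁+c₋₁)·log 2; the gap equals (c₁+c₋₁)·ψ((c₁−c₋₁)/(c₁+c₋₁)) where ψ(θ) = ((1+θ)log(1+θ) + (1−θ)log(1−θ))/2. -/
import Mathlib

lemma log_ge_one_sub_inv {x : ℝ} (hx : 0 < x) : 1 - x⁻¹ ≤ Real.log x := by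
  have h := Real.log_le_sub_one_of_pos (inv_pos.mpr hx)
  rw [Real.log_inv] at h
  linarith

/-- Classification calibration of logistic loss with asymmetric weights:
for `c₁, c₋₁ > 0` and `G(α) = c₁·log(1+e^{−α}) + c₋₁·log(1+e^{α})`, the infimum of `G` is
`c₁·log((c₁+c₋₁)/c₁) + c₋₁·log((c₁+c₋₁)/c₋₁)`, attained at `α = log(c₁/c₋₁)`; if
`c₁ > c₋₁` then `inf_{α ≤ 0} G(α) = G(0) = (c₁+c₋₁)·log 2`; and the gap equals
`(c₁+c₋₁)·ψ((c₁−c₋₁)/(c₁+c₋₁))` with `ψ(θ) = ((1+θ)log(1+θ) + (1−θ)log(1−θ))/2`. -/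
theorem logistic_loss_calibration
    (c1 cm1 : ℝ) (hc1 : 0 < c1) (hcm1 : 0 < cm1)
    (G : ℝ → ℝ)
    (hG : ∀ α, G α = c1 * Real.log (1 + Real.exp (-α)) + cm1 * Real.log (1 + Real.exp α)) :
    IsGLB (Set.range G)
      (c1 * Real.log ((c1 + cm1) / c1) + cm1 * Real.log ((c1 + cm1) / cm1)) ∧
    G (Real.log (c1 / cm1))
      = c1 * Real.log ((c1 + cm1) / c1) + cm1 * Real.log ((c1 + cm1) / cm1) ∧
    (c1 > cm1 →
      IsGLB (G '' Set.Iic 0) (G 0) ∧ G 0 = (c1 + cm1) * Real.log 2) ∧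
    (c1 + cm1) * Real.log 2
        - (c1 * Real.log ((c1 + cm1) / c1) + cm1 * Real.log ((c1 + cm1) / cm1))
      = (c1 + cm1) *
          (((1 + (c1 - cm1) / (c1 + cm1)) * Real.log (1 + (c1 - cm1) / (c1 + cm1))
            + (1 - (c1 - cm1) / (c1 + cm1)) * Real.log (1 - (c1 - cm1) / (c1 + cm1))) / 2) := by
  have hs : 0 < c1 + cm1 := by linarith
  -- attained value
  have hval : G (Real.log (c1 / cm1))
      = c1 * Real.log ((c1 + cm1) / c1) + cm1 * Real.log ((c1 + cm1) / cm1) := by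
    rw [hG]
    have h1 : Real.exp (Real.log (c1 / cm1)) = c1 / cm1 :=
      Real.exp_log (div_pos hc1 hcm1)
    have h2 : Real.exp (-Real.log (c1 / cm1)) = cm1 / c1 := by
      rw [Real.exp_neg, h1, inv_div]
    rw [h1, h2,
      show 1 + cm1 / c1 = (c1 + cm1) / c1 by field_simp,
      show 1 + c1 / cm1 = (c1 + cm1) / cm1 by field_simp; ring]
  -- global lower bound
  have key : ∀ α, c1 * Real.log ((c1 + cm1) / c1) + cm1 * Real.log ((c1 + cm1) / cm1) ≤ G α := by
    intro α
    rw [hG]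
    have hE : 0 < Real.exp α := Real.exp_pos α
    have hE' : 0 < Real.exp (-α) := Real.exp_pos _
    set u := c1 * (1 + Real.exp (-α)) / (c1 + cm1) with hu_def
    set v := cm1 * (1 + Real.exp α) / (c1 + cm1) with hv_def
    have hu : 0 < u := by positivity
    have hv : 0 < v := by positivity
    have h1 := log_ge_one_sub_inv hu
    have h2 := log_ge_one_sub_inv hv
    have e1 : Real.log u = Real.log (1 + Real.exp (-α)) - Real.log ((c1 + cm1) / c1) := by
      rw [hu_def, Real.log_div (by positivity) hs.ne', Real.log_mul hc1.ne' (by positivity),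
        Real.log_div hs.ne' hc1.ne']
      ring
    have e2 : Real.log v = Real.log (1 + Real.exp α) - Real.log ((c1 + cm1) / cm1) := by
      rw [hv_def, Real.log_div (by positivity) hs.ne', Real.log_mul hcm1.ne' (by positivity),
        Real.log_div hs.ne' hcm1.ne']
      ring
    have hsum : c1 * u⁻¹ + cm1 * v⁻¹ = c1 + cm1 := by
      rw [hu_def, hv_def, Real.exp_neg]
      field_simp
      ring
    have t1 : c1 - c1 * u⁻¹ ≤ c1 * Real.log u := by
      nlinarith [mul_le_mul_of_nonneg_left h1 hc1.le]
    have t2 : cm1 - cm1 * v⁻¹ ≤ cm1 * Real.log v := by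
      nlinarith [mul_le_mul_of_nonneg_left h2 hcm1.le]
    have hnn : 0 ≤ c1 * Real.log u + cm1 * Real.log v := by linarith
    nlinarith [hnn, mul_le_mul_of_nonneg_left (le_of_eq e1) hc1.le,
      mul_le_mul_of_nonneg_left (le_of_eq e1.symm) hc1.le,
      mul_le_mul_of_nonneg_left (le_of_eq e2) hcm1.le,
      mul_le_mul_of_nonneg_left (le_of_eq e2.symm) hcm1.le]
  refine ⟨?_, hval, ?_, ?_⟩
  · exact IsLeast.isGLB ⟨⟨_, hval⟩, by rintro _ ⟨α, rfl⟩; exact key α⟩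
  · intro hgt
    have hG0 : G 0 = (c1 + cm1) * Real.log 2 := by
      rw [hG]; simp [Real.exp_zero]; norm_num; ring
    refine ⟨IsLeast.isGLB ⟨⟨0, by simp, rfl⟩, ?_⟩, hG0⟩
    rintro _ ⟨α, hα, rfl⟩
    simp only [Set.mem_Iic] at hα
    rw [hG, hG]
    simp only [neg_zero, Real.exp_zero]
    norm_num
    have hE : 0 < Real.exp α := Real.exp_pos α
    have hE1 : Real.exp α ≤ 1 := Real.exp_le_one_iff.mpr hα
    have hE' : 0 < Real.exp (-α) := Real.exp_pos _
    have h1 := log_ge_one_sub_inv (show (0:ℝ) < (1 + Real.exp (-α)) / 2 by positivity)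
    have h2 := log_ge_one_sub_inv (show (0:ℝ) < (1 + Real.exp α) / 2 by positivity)
    have e1 : Real.log ((1 + Real.exp (-α)) / 2) = Real.log (1 + Real.exp (-α)) - Real.log 2 :=
      Real.log_div (by positivity) (by norm_num)
    have e2 : Real.log ((1 + Real.exp α) / 2) = Real.log (1 + Real.exp α) - Real.log 2 :=
      Real.log_div (by positivity) (by norm_num)
    have hinv1 : ((1 + Real.exp (-α)) / 2)⁻¹ = 2 * Real.exp α / (1 + Real.exp α) := by
      rw [Real.exp_neg]
      rw [inv_div]
      field_simp
      ring
    have hinv2 : ((1 + Real.exp α) / 2)⁻¹ = 2 / (1 + Real.exp α) := by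
      rw [inv_div]
    rw [e1, hinv1] at h1
    rw [e2, hinv2] at h2
    have hden : 0 < 1 + Real.exp α := by positivity
    have key2 : 0 ≤ c1 * (1 - 2 * Real.exp α / (1 + Real.exp α))
        + cm1 * (1 - 2 / (1 + Real.exp α)) := by
      have : c1 * (1 - 2 * Real.exp α / (1 + Real.exp α)) + cm1 * (1 - 2 / (1 + Real.exp α))
          = (c1 - cm1) * (1 - Real.exp α) / (1 + Real.exp α) := by
        field_simp
        ring
      rw [this]
      apply div_nonneg _ hden.le
      nlinarith
    nlinarith [mul_le_mul_of_nonneg_left h1 hc1.le, mul_le_mul_of_nonneg_left h2 hcm1.le, key2]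
  · have hp : 1 + (c1 - cm1) / (c1 + cm1) = 2 * c1 / (c1 + cm1) := by field_simp; ring
    have hm : 1 - (c1 - cm1) / (c1 + cm1) = 2 * cm1 / (c1 + cm1) := by field_simp; ring
    rw [hp, hm,
      Real.log_div (by positivity) hs.ne', Real.log_mul (by norm_num) hc1.ne',
      Real.log_div (by positivity) hs.ne', Real.log_mul (by norm_num) hcm1.ne',
      Real.log_div hs.ne' hc1.ne', Real.log_div hs.ne' hcm1.ne']
    field_simp
    ring
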